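/- arXiv:1503.02273 — 3 statements merged into one kernel-verified Lean document; each statement's English description precedes it below -/
import Mathlib

section
/- A countable intersection of α-winning sets in ℝ^n is α-winning. -/
open Metric

/-- A closed ball in `V`, recorded by its center and radius. -/
structure GBall (V : Type*) where
  c : V
  r : ℝ

instance {V : Type*} [Inhabited V] : Inhabited (GBall V) := ⟨⟨default, 0⟩⟩

/-- The set of points of a recorded closed ball. -/
def GBall.toSet {V : Type*} [PseudoMetricSpace V] (B : GBall V) : Set V :=
  Metric.closedBall B.c B.r

/-- The history of a play of Schmidt's game.  A strategy for Alice is a map sending the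
list of Bob's balls chosen so far to Alice's next ball; a strategy for Bob is a map
sending the list of Alice's balls chosen so far to Bob's next ball (with Bob's first
ball being his strategy applied to the empty list).  `schmidtHist σA σB i` is the list
of the first `i` rounds `(B₁, A₁), …, (Bᵢ, Aᵢ)` of the induced play. -/
def schmidtHist {V : Type*} (σA σB : List (GBall V) → GBall V) :
    ℕ → List (GBall V × GBall V)
  | 0 => []
  | (i + 1) =>
    let h := schmidtHist σA σB i
    let b := σB (h.map Prod.snd)
    let a := σA (h.map Prod.fst ++ [b])
    h ++ [(b, a)]

/-- Bob's `i`-th ball (0-indexed: `bobBall σA σB 0 = B₁`). -/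
def bobBall {V : Type*} [Inhabited V] (σA σB : List (GBall V) → GBall V) (i : ℕ) :
    GBall V :=
  ((schmidtHist σA σB (i + 1)).getLastD default).1

/-- Alice's `i`-th ball (0-indexed: `aliceBall σA σB 0 = A₁`). -/
def aliceBall {V : Type*} [Inhabited V] (σA σB : List (GBall V) → GBall V) (i : ℕ) :
    GBall V :=
  ((schmidtHist σA σB (i + 1)).getLastD default).2

/-- Alice plays legally in the `(α, β)`-game: each of her balls is contained in Bob's
previous ball and has radius exactly `α` times its radius. -/
def AliceLegal {V : Type*} [PseudoMetricSpace V] [Inhabited V] (α : ℝ)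
    (σA σB : List (GBall V) → GBall V) : Prop :=
  ∀ i, (aliceBall σA σB i).toSet ⊆ (bobBall σA σB i).toSet ∧
    (aliceBall σA σB i).r = α * (bobBall σA σB i).r

/-- Bob plays legally in the `(α, β)`-game: his first ball has positive radius, and each
subsequent ball is contained in Alice's previous ball and has radius exactly `β` times
its radius. -/
def BobLegal {V : Type*} [PseudoMetricSpace V] [Inhabited V] (β : ℝ)
    (σA σB : List (GBall V) → GBall V) : Prop :=
  0 < (bobBall σA σB 0).r ∧
  ∀ i, (bobBall σA σB (i + 1)).toSet ⊆ (aliceBall σA σB i).toSet ∧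
    (bobBall σA σB (i + 1)).r = β * (aliceBall σA σB i).r

/-- `S` is `(α, β)`-winning: Alice has a strategy which is legal against every legal play
of Bob and forces the intersection of Bob's balls to lie inside `S`. -/
def SchmidtWins {V : Type*} [PseudoMetricSpace V] [Inhabited V] (α β : ℝ)
    (S : Set V) : Prop :=
  ∃ σA : List (GBall V) → GBall V, ∀ σB : List (GBall V) → GBall V,
    BobLegal β σA σB →
      AliceLegal α σA σB ∧ (⋂ i, (bobBall σA σB i).toSet) ⊆ S

/-- `S` is `α`-winning: it is `(α, β)`-winning for every `β ∈ (0, 1)`. -/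
def IsAlphaWinning {V : Type*} [PseudoMetricSpace V] [Inhabited V] (α : ℝ)
    (S : Set V) : Prop :=
  ∀ β : ℝ, 0 < β → β < 1 → SchmidtWins α β S

-- general game lemmas (already verified)
section GameLemmas
variable {V : Type*} [Inhabited V] (σA σB : List (GBall V) → GBall V)
lemma bobBall_def (i : ℕ) :
    bobBall σA σB i = σB ((schmidtHist σA σB i).map Prod.snd) := by
  simp [bobBall, schmidtHist, List.getLastD_concat]
lemma aliceBall_def (i : ℕ) :
    aliceBall σA σB i = σA ((schmidtHist σA σB i).map Prod.fst ++ [bobBall σA σB i]) := by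
  simp [aliceBall, bobBall, schmidtHist, List.getLastD_concat]
lemma hist_succ (i : ℕ) :
    schmidtHist σA σB (i+1) = schmidtHist σA σB i ++ [(bobBall σA σB i, aliceBall σA σB i)] := by
  conv_lhs => rw [schmidtHist]
  rw [bobBall_def, aliceBall_def, bobBall_def]
lemma map_fst_hist (i : ℕ) :
    (schmidtHist σA σB i).map Prod.fst = (List.range i).map (bobBall σA σB) := by
  induction i with
  | zero => simp [schmidtHist]
  | succ i ih => rw [hist_succ, List.range_succ]; simp [ih]
lemma map_snd_hist (i : ℕ) :
    (schmidtHist σA σB i).map Prod.snd = (List.range i).map (aliceBall σA σB) := by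
  induction i with
  | zero => simp [schmidtHist]
  | succ i ih => rw [hist_succ, List.range_succ]; simp [ih]
lemma bobBall_eq (i : ℕ) :
    bobBall σA σB i = σB ((List.range i).map (aliceBall σA σB)) := by
  rw [bobBall_def, map_snd_hist]
lemma aliceBall_eq (i : ℕ) :
    aliceBall σA σB i = σA ((List.range (i+1)).map (bobBall σA σB)) := by
  rw [aliceBall_def, map_fst_hist, List.range_succ]; simp
end GameLemmas

lemma getD_range_map {V : Type*} [Inhabited V] {N m : ℕ} (h : m < N) (f : ℕ → GBall V) :
    ((List.range N).map f).getD m default = f m := by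
  rw [List.getD_eq_getElem?_getD]
  simp [List.getElem?_map, List.getElem?_range h]

-- chain lemma
lemma bob_chain {V : Type*} [PseudoMetricSpace V] [Inhabited V] {α β : ℝ}
    (σA σB : List (GBall V) → GBall V)
    (hB : ∀ m, (bobBall σA σB (m+1)).toSet ⊆ (aliceBall σA σB m).toSet ∧
      (bobBall σA σB (m+1)).r = β * (aliceBall σA σB m).r) (i0 : ℕ) :
    ∀ d : ℕ, (∀ m, i0 < m → m ≤ i0 + d →
        (aliceBall σA σB m).toSet ⊆ (bobBall σA σB m).toSet ∧
        (aliceBall σA σB m).r = α * (bobBall σA σB m).r) →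
      (bobBall σA σB (i0+d+1)).toSet ⊆ (aliceBall σA σB i0).toSet ∧
      (bobBall σA σB (i0+d+1)).r = β * (α*β)^d * (aliceBall σA σB i0).r
  | 0, _ => by simpa using hB i0
  | (d+1), h => by
    have ih := bob_chain σA σB hB i0 d (fun m h1 h2 => h m h1 (by omega))
    have hAm := h (i0+d+1) (by omega) (by omega)
    have hBm := hB (i0+d+1)
    refine ⟨hBm.1.trans (hAm.1.trans ih.1), ?_⟩
    have : i0+(d+1)+1 = (i0+d+1)+1 := rfl
    rw [this, hBm.2, hAm.2, ih.2]; ring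

-- positivity lemma
lemma bob_pos {V : Type*} [PseudoMetricSpace V] [Inhabited V] {α β : ℝ}
    (hα : 0 < α) (hβ : 0 < β) (σA σB : List (GBall V) → GBall V)
    (h0 : 0 < (bobBall σA σB 0).r)
    (hB : ∀ m, (bobBall σA σB (m+1)).r = β * (aliceBall σA σB m).r) :
    ∀ m : ℕ, (∀ m', m' < m → (aliceBall σA σB m').r = α * (bobBall σA σB m').r) →
      0 < (bobBall σA σB m).r
  | 0, _ => h0
  | (m+1), h => by
    have ih := bob_pos hα hβ σA σB h0 hB m (fun m' hm' => h m' (by omega))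
    rw [hB m, h m (by omega)]
    positivity

def sIdx (k j : ℕ) : ℕ := 2^k * (2*j+1) - 1
def sK (i : ℕ) : ℕ := padicValNat 2 (i+1)
def sJ (i : ℕ) : ℕ := ((i+1) / 2^(sK i) - 1) / 2

lemma sIdx_add_one (k j : ℕ) : sIdx k j + 1 = 2^k * (2*j+1) := by
  have : 1 ≤ 2^k * (2*j+1) := Nat.one_le_iff_ne_zero.2 (by positivity)
  simp [sIdx]; omega

lemma sK_sIdx (k j : ℕ) : sK (sIdx k j) = k := by
  rw [sK, sIdx_add_one, padicValNat.mul (by positivity) (by positivity),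
    padicValNat.prime_pow, padicValNat.eq_zero_of_not_dvd (by omega), Nat.add_zero]

lemma sJ_sIdx (k j : ℕ) : sJ (sIdx k j) = j := by
  rw [sJ, sK_sIdx, sIdx_add_one, Nat.mul_div_cancel_left _ (by positivity)]
  omega

lemma sIdx_sK_sJ (i : ℕ) : sIdx (sK i) (sJ i) = i := by
  obtain ⟨m, hm⟩ : 2^(sK i) ∣ (i+1) := pow_padicValNat_dvd
  have hm0 : m ≠ 0 := by rintro rfl; simp at hm
  have hnd : ¬ 2^(sK i + 1) ∣ (i+1) := pow_succ_padicValNat_not_dvd (by omega)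
  have hmodd : ¬ 2 ∣ m := by
    rintro ⟨c, hc⟩
    exact hnd ⟨c, by rw [hm, hc]; ring⟩
  have h2 : (i+1) / 2^(sK i) = m := by rw [hm, Nat.mul_div_cancel_left _ (by positivity)]
  have hj : 2 * (sJ i) + 1 = m := by rw [sJ, h2]; omega
  rw [← hj] at hm
  have := sIdx_add_one (sK i) (sJ i)
  omega

lemma sIdx_succ (k j : ℕ) : sIdx k (j+1) = sIdx k j + 2^(k+1) := by
  have h1 := sIdx_add_one k j
  have h2 := sIdx_add_one k (j+1)
  have h3 : 2^(k+1) = 2 * 2^k := by ring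
  nlinarith [h1, h2]

lemma sIdx_le_sIdx (k : ℕ) {t j : ℕ} (h : t ≤ j) : sIdx k t ≤ sIdx k j := by
  have : 2^k * (2*t+1) ≤ 2^k * (2*j+1) := by apply Nat.mul_le_mul_left; omega
  simp [sIdx]; omega

lemma sIdx_lt_sIdx (k : ℕ) {t j : ℕ} (h : t < j) : sIdx k t < sIdx k j := by
  have h1 := sIdx_add_one k t
  have h2 := sIdx_add_one k j
  have h2k : 0 < 2^k := by positivity
  nlinarith

/-- the effective β parameter for subgame `k`. -/
noncomputable def bSub (α β : ℝ) (k : ℕ) : ℝ := β * (α*β)^(2^(k+1) - 1)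

/-- Alice's combined strategy. -/
def bigA {V : Type*} [Inhabited V] (σ : ℕ → List (GBall V) → GBall V) :
    List (GBall V) → GBall V := fun l =>
  σ (sK (l.length - 1))
    ((List.range (sJ (l.length - 1) + 1)).map
      (fun t => l.getD (sIdx (sK (l.length - 1)) t) default))

open scoped Classical

/-- Bob's simulated strategy in subgame `k`. -/
noncomputable def subB {V : Type*} [PseudoMetricSpace V] [Inhabited V] (α β : ℝ)
    (σ : ℕ → List (GBall V) → GBall V) (σB : List (GBall V) → GBall V) (k : ℕ) :
    List (GBall V) → GBall V := fun l =>
  if l.length = 0 then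
    (if 0 < (bobBall (bigA σ) σB (sIdx k 0)).r then bobBall (bigA σ) σB (sIdx k 0)
     else ⟨default, 1⟩)
  else
    if (bobBall (bigA σ) σB (sIdx k l.length)).toSet ⊆ (l.getLastD default).toSet ∧
        (bobBall (bigA σ) σB (sIdx k l.length)).r = bSub α β k * (l.getLastD default).r
    then bobBall (bigA σ) σB (sIdx k l.length)
    else ⟨(l.getLastD default).c, bSub α β k * (l.getLastD default).r⟩

lemma bSub_pos {α β : ℝ} (hα : 0 < α) (hβ : 0 < β) (k : ℕ) : 0 < bSub α β k := by
  unfold bSub; positivity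

lemma bSub_le_one {α β : ℝ} (hα0 : 0 < α) (hα1 : α < 1) (hβ0 : 0 < β) (hβ1 : β < 1)
    (k : ℕ) : bSub α β k ≤ 1 := by
  unfold bSub
  have h1 : (α*β)^(2^(k+1)-1) ≤ 1 :=
    pow_le_one₀ (by positivity) (by nlinarith)
  nlinarith

/-- Bob's simulated strategy is always legal in subgame `k`. -/
lemma subB_legal {V : Type*} [PseudoMetricSpace V] [Inhabited V] {α β : ℝ}
    (hα0 : 0 < α) (hα1 : α < 1) (hβ0 : 0 < β) (hβ1 : β < 1)
    (σ : ℕ → List (GBall V) → GBall V) (σB : List (GBall V) → GBall V) (k : ℕ) :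
    BobLegal (bSub α β k) (σ k) (subB α β σ σB k) := by
  classical
  have hb0 := bSub_pos hα0 hβ0 (k := k)
  have hb1 := bSub_le_one hα0 hα1 hβ0 hβ1 (k := k)
  constructor
  · rw [bobBall_eq]
    simp only [List.range_zero, List.map_nil, subB, List.length_nil]
    split_ifs with h1 h2
    · exact h2
    · norm_num
    · exact absurd trivial h1
    · exact absurd trivial h1
  · intro j
    rw [bobBall_eq]
    set l := (List.range (j+1)).map (aliceBall (σ k) (subB α β σ σB k)) with hl
    have hlen : l.length = j + 1 := by simp [hl]
    have hlast : l.getLastD default = aliceBall (σ k) (subB α β σ σB k) j := by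
      rw [hl, List.range_succ, List.map_append]
      simp [List.getLastD_concat]
    rw [subB]
    rw [if_neg (by omega), hlen, hlast]
    split_ifs with h
    · exact h
    · constructor
      · set a := aliceBall (σ k) (subB α β σ σB k) j
        show closedBall a.c (bSub α β k * a.r) ⊆ closedBall a.c a.r
        rcases le_or_gt 0 a.r with hr | hr
        · exact closedBall_subset_closedBall (by nlinarith)
        · rw [closedBall_eq_empty.2 (show bSub α β k * a.r < 0 by nlinarith)]
          exact Set.empty_subset _
      · rfl

lemma bSub_lt_one {α β : ℝ} (hα0 : 0 < α) (hα1 : α < 1) (hβ0 : 0 < β) (hβ1 : β < 1)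
    (k : ℕ) : bSub α β k < 1 := by
  unfold bSub
  have h1 : (α*β)^(2^(k+1)-1) ≤ 1 := pow_le_one₀ (by positivity) (by nlinarith)
  have h2 : (0:ℝ) < (α*β)^(2^(k+1)-1) := by positivity
  nlinarith

/-- A countable intersection of `α`-winning sets in `ℝⁿ` is `α`-winning. -/
theorem countable_inter_alpha_winning (n : ℕ) (α : ℝ) (hα0 : 0 < α) (hα1 : α < 1)
    (S : ℕ → Set (EuclideanSpace ℝ (Fin n)))
    (hS : ∀ i, IsAlphaWinning α (S i)) :
    IsAlphaWinning α (⋂ i, S i) := by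
  intro β hβ0 hβ1
  choose σ hσ using fun k =>
    hS k (bSub α β k) (bSub_pos hα0 hβ0 k) (bSub_lt_one hα0 hα1 hβ0 hβ1 k)
  refine ⟨bigA σ, ?_⟩
  intro σB hBob
  have hsub : ∀ k, AliceLegal α (σ k) (subB α β σ σB k) ∧
      (⋂ j, (bobBall (σ k) (subB α β σ σB k) j).toSet) ⊆ S k :=
    fun k => hσ k _ (subB_legal hα0 hα1 hβ0 hβ1 σ σB k)
  have Q : ∀ i : ℕ,
      bobBall (σ (sK i)) (subB α β σ σB (sK i)) (sJ i) = bobBall (bigA σ) σB i ∧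
      aliceBall (σ (sK i)) (subB α β σ σB (sK i)) (sJ i) = aliceBall (bigA σ) σB i := by
    intro i
    induction i using Nat.strong_induction_on with
    | _ i IH =>
      have hAL : ∀ m, m < i →
          (aliceBall (bigA σ) σB m).toSet ⊆ (bobBall (bigA σ) σB m).toSet ∧
          (aliceBall (bigA σ) σB m).r = α * (bobBall (bigA σ) σB m).r := by
        intro m hm
        have h := (hsub (sK m)).1 (sJ m)
        rw [(IH m hm).1, (IH m hm).2] at h
        exact h
      have hidx : sIdx (sK i) (sJ i) = i := sIdx_sK_sJ i
      have hBpart : bobBall (σ (sK i)) (subB α β σ σB (sK i)) (sJ i)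
          = bobBall (bigA σ) σB i := by
        rw [bobBall_eq]
        cases hj : sJ i with
        | zero =>
          rw [hj] at hidx
          have hpos : 0 < (bobBall (bigA σ) σB i).r :=
            bob_pos hα0 hβ0 _ _ hBob.1 (fun m => (hBob.2 m).2) i
              (fun m' hm' => (hAL m' hm').2)
          simp only [List.range_zero, List.map_nil]
          rw [subB, hidx]
          rw [if_pos (show ([] : List (GBall (EuclideanSpace ℝ (Fin n)))).length = 0
            from rfl)]
          rw [if_pos hpos]
        | succ t =>
          rw [hj] at hidx
          have hlt : sIdx (sK i) t < i := by
            have h := sIdx_lt_sIdx (sK i) (Nat.lt_succ_self t)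
            rw [hidx] at h; exact h
          have IHt := IH (sIdx (sK i) t) hlt
          rw [sK_sIdx, sJ_sIdx] at IHt
          have hstep : sIdx (sK i) (t+1) = sIdx (sK i) t + 2^(sK i + 1) := sIdx_succ _ _
          have h1 : 1 ≤ 2^(sK i + 1) := Nat.one_le_two_pow
          have hi : i = sIdx (sK i) t + (2^(sK i + 1) - 1) + 1 := by omega
          have hchain := bob_chain (α := α) (β := β) (bigA σ) σB hBob.2
            (sIdx (sK i) t) (2^(sK i + 1) - 1) (fun m hm1 hm2 => hAL m (by omega))
          rw [← hi] at hchain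
          set l := (List.range (t+1)).map (aliceBall (σ (sK i)) (subB α β σ σB (sK i)))
            with hl
          have hlen : l.length = t + 1 := by simp [hl]
          have hlast : l.getLastD default
              = aliceBall (σ (sK i)) (subB α β σ σB (sK i)) t := by
            rw [hl, List.range_succ, List.map_append]
            simp [List.getLastD_concat]
          rw [subB]
          rw [if_neg (by omega), hlen, hlast, IHt.2, hidx]
          rw [if_pos ⟨hchain.1, by unfold bSub; exact hchain.2⟩]
      have hApart : aliceBall (σ (sK i)) (subB α β σ σB (sK i)) (sJ i)
          = aliceBall (bigA σ) σB i := by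
        rw [aliceBall_eq, aliceBall_eq]
        conv_rhs => rw [bigA]
        simp only [List.length_map, List.length_range, Nat.add_sub_cancel]
        congr 1
        refine List.map_congr_left ?_
        intro t ht
        rw [List.mem_range] at ht
        have htle : t ≤ sJ i := by omega
        have hle : sIdx (sK i) t < i + 1 := by
          have h := sIdx_le_sIdx (sK i) htle
          rw [hidx] at h; omega
        rw [getD_range_map hle]
        by_cases htj : t = sJ i
        · subst htj; rw [hidx]; exact hBpart
        · have hlt : sIdx (sK i) t < i := by
            have h := sIdx_lt_sIdx (sK i) (show t < sJ i by omega)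
            rw [hidx] at h; exact h
          have h := IH _ hlt
          rw [sK_sIdx, sJ_sIdx] at h
          exact h.1
      exact ⟨hBpart, hApart⟩
  constructor
  · intro i
    have h := (hsub (sK i)).1 (sJ i)
    rw [(Q i).1, (Q i).2] at h
    exact h
  · intro x hx
    rw [Set.mem_iInter] at hx ⊢
    intro k
    apply (hsub k).2
    rw [Set.mem_iInter]
    intro j
    have q := (Q (sIdx k j)).1
    rw [sK_sIdx, sJ_sIdx] at q
    rw [q]
    exact hx (sIdx k j)
end

section
/- The image of an α-winning set in ℝ^n under a bilipschitz homeomorphism f: ℝ^n → ℝ^n is α'-winning, where α' depends only on α and the bilipschitz constant of f. -/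
open Metric

section AuxLemmas

variable {V : Type*}

lemma schmidtHist_succ' (σA σB : List (GBall V) → GBall V) (i : ℕ) :
    schmidtHist σA σB (i + 1) =
      schmidtHist σA σB i ++
        [(σB ((schmidtHist σA σB i).map Prod.snd),
          σA ((schmidtHist σA σB i).map Prod.fst ++
            [σB ((schmidtHist σA σB i).map Prod.snd)]))] := rfl

lemma bobBall_eq' [Inhabited V] (σA σB : List (GBall V) → GBall V) (i : ℕ) :
    bobBall σA σB i = σB ((schmidtHist σA σB i).map Prod.snd) := by
  rw [bobBall, schmidtHist_succ']; simp

lemma aliceBall_eq' [Inhabited V] (σA σB : List (GBall V) → GBall V) (i : ℕ) :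
    aliceBall σA σB i =
      σA ((schmidtHist σA σB i).map Prod.fst ++ [bobBall σA σB i]) := by
  rw [aliceBall, schmidtHist_succ', bobBall_eq']; simp

/-- Pull back one of Bob's balls through `g = f⁻¹`. -/
noncomputable def pullB (g : V → V) (L : ℝ) (B : GBall V) : GBall V := ⟨g B.c, B.r / L⟩

/-- Push forward one of Alice's balls through `f` (radius shrinks by `L`). -/
noncomputable def pushA (f : V → V) (L : ℝ) (B : GBall V) : GBall V := ⟨f B.c, B.r / L⟩

/-- Push forward one of Bob's balls through `f` (radius grows by `L`). -/
noncomputable def pushB (f : V → V) (L : ℝ) (B : GBall V) : GBall V := ⟨f B.c, B.r * L⟩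

lemma pullB_pushB {f g : V → V} (hgf : ∀ x, g (f x) = x) {L : ℝ} (hL : L ≠ 0)
    (B : GBall V) : pullB g L (pushB f L B) = B := by
  simp [pullB, pushB, hgf, mul_div_cancel_right₀ _ hL]

lemma pushB_pullB {f g : V → V} (hfg : ∀ x, f (g x) = x) {L : ℝ} (hL : L ≠ 0)
    (B : GBall V) : pushB f L (pullB g L B) = B := by
  simp [pullB, pushB, hfg, div_mul_cancel₀ _ hL]

lemma hist_conj {f g : V → V} (hgf : ∀ x, g (f x) = x) (hfg : ∀ x, f (g x) = x)
    {L : ℝ} (hL : L ≠ 0) (σA σB' : List (GBall V) → GBall V) (n : ℕ) :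
    schmidtHist (fun l => pushA f L (σA (l.map (pullB g L)))) σB' n =
      (schmidtHist σA (fun l => pullB g L (σB' (l.map (pushA f L)))) n).map
        (Prod.map (pushB f L) (pushA f L)) := by
  induction n with
  | zero => rfl
  | succ n ih =>
    have hid : (pullB g L ∘ (pushB f L ∘ (Prod.fst : GBall V × GBall V → GBall V)))
        = Prod.fst := by
      funext p; simp [Function.comp_apply, pullB_pushB hgf hL]
    have h1 : (Prod.snd ∘ Prod.map (pushB f L) (pushA f L))
        = (pushA f L) ∘ (Prod.snd : GBall V × GBall V → GBall V) := rfl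
    have h2 : (Prod.fst ∘ Prod.map (pushB f L) (pushA f L))
        = (pushB f L) ∘ (Prod.fst : GBall V × GBall V → GBall V) := rfl
    rw [schmidtHist_succ', schmidtHist_succ', ih]
    simp only [List.map_append, List.map_map, List.map_cons, List.map_nil, h1, h2,
      hid, pushB_pullB hfg hL, Prod.map_apply]

lemma bobBall_conj [Inhabited V] {f g : V → V} (hgf : ∀ x, g (f x) = x)
    (hfg : ∀ x, f (g x) = x) {L : ℝ} (hL : L ≠ 0)
    (σA σB' : List (GBall V) → GBall V) (i : ℕ) :
    bobBall (fun l => pushA f L (σA (l.map (pullB g L)))) σB' i =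
      pushB f L (bobBall σA (fun l => pullB g L (σB' (l.map (pushA f L)))) i) := by
  rw [bobBall_eq', bobBall_eq', hist_conj hgf hfg hL]
  simp only [List.map_map, pushB_pullB hfg hL]
  rfl

lemma aliceBall_conj [Inhabited V] {f g : V → V} (hgf : ∀ x, g (f x) = x)
    (hfg : ∀ x, f (g x) = x) {L : ℝ} (hL : L ≠ 0)
    (σA σB' : List (GBall V) → GBall V) (i : ℕ) :
    aliceBall (fun l => pushA f L (σA (l.map (pullB g L)))) σB' i =
      pushA f L (aliceBall σA (fun l => pullB g L (σB' (l.map (pushA f L)))) i) := by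
  have hid : (pullB g L ∘ (pushB f L ∘ (Prod.fst : GBall V × GBall V → GBall V)))
      = Prod.fst := by
    funext p; simp [Function.comp_apply, pullB_pushB hgf hL]
  have h2 : (Prod.fst ∘ Prod.map (pushB f L) (pushA f L))
      = (pushB f L) ∘ (Prod.fst : GBall V × GBall V → GBall V) := rfl
  rw [aliceBall_eq', aliceBall_eq', hist_conj hgf hfg hL, bobBall_conj hgf hfg hL]
  simp only [List.map_append, List.map_map, List.map_cons, List.map_nil, h2, hid,
    pullB_pushB hgf hL]

end AuxLemmas

/-- The image of an `α`-winning set in `ℝⁿ` under a bilipschitz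
homeomorphism of `ℝⁿ` is `α'`-winning, where `α'` depends only on `α` and the
bilipschitz constant. -/
theorem alpha_winning_image_bilipschitz (n : ℕ) (α : ℝ) (hα0 : 0 < α) (hα1 : α < 1)
    (L : ℝ) (hL : 1 ≤ L) :
    ∃ α' : ℝ, 0 < α' ∧ α' < 1 ∧
      ∀ f : EuclideanSpace ℝ (Fin n) → EuclideanSpace ℝ (Fin n),
        Function.Surjective f →
        (∀ x y, (1 / L) * dist x y ≤ dist (f x) (f y) ∧ dist (f x) (f y) ≤ L * dist x y) →
        ∀ S : Set (EuclideanSpace ℝ (Fin n)), IsAlphaWinning α S →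
          IsAlphaWinning α' (f '' S) := by
  have hL0 : (0:ℝ) < L := lt_of_lt_of_le one_pos hL
  have hLne : L ≠ 0 := ne_of_gt hL0
  have hL2 : (0:ℝ) < L ^ 2 := by positivity
  have hL2' : (1:ℝ) ≤ L ^ 2 := by nlinarith
  refine ⟨α / L ^ 2, by positivity, ?_, ?_⟩
  · have h1 : α / L ^ 2 ≤ α := by
      rw [div_le_iff₀ hL2]
      nlinarith [mul_le_mul_of_nonneg_left hL2' hα0.le]
    linarith
  intro f hsurj hbil S hS β hβ0 hβ1
  -- `f` is injective, with two-sided inverse `g`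
  have hinj : Function.Injective f := by
    intro x y hxy
    have h := (hbil x y).1
    rw [hxy, dist_self] at h
    have h1L : (0:ℝ) < 1 / L := by positivity
    have : dist x y ≤ 0 := by nlinarith [dist_nonneg (x := x) (y := y)]
    exact dist_le_zero.mp this
  set g : EuclideanSpace ℝ (Fin n) → EuclideanSpace ℝ (Fin n) :=
    Function.surjInv hsurj with hgdef
  have hfg : ∀ x, f (g x) = x := fun x => Function.surjInv_eq hsurj x
  have hgf : ∀ x, g (f x) = x := fun x => hinj (hfg (f x))
  have hup : ∀ x y, dist (f x) (f y) ≤ L * dist x y := fun x y => (hbil x y).2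
  have hdown : ∀ x y, dist x y ≤ L * dist (f x) (f y) := by
    intro x y
    have h := (hbil x y).1
    have h2 := mul_le_mul_of_nonneg_left h hL0.le
    calc dist x y = L * (1 / L * dist x y) := by field_simp
      _ ≤ L * dist (f x) (f y) := h2
  -- parameters for the auxiliary game
  have hβ' : β / L ^ 2 < 1 := by
    have : β / L ^ 2 ≤ β := by
      rw [div_le_iff₀ hL2]
      nlinarith [mul_le_mul_of_nonneg_left hL2' hβ0.le]
    linarith
  obtain ⟨σA, hσA⟩ := hS (β / L ^ 2) (by positivity) hβ'
  refine ⟨fun l => pushA f L (σA (l.map (pullB g L))), fun σB' hBob' => ?_⟩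
  have hb : ∀ i, bobBall (fun l => pushA f L (σA (l.map (pullB g L)))) σB' i
      = pushB f L (bobBall σA (fun l => pullB g L (σB' (l.map (pushA f L)))) i) :=
    bobBall_conj hgf hfg hLne σA σB'
  have ha : ∀ i, aliceBall (fun l => pushA f L (σA (l.map (pullB g L)))) σB' i
      = pushA f L (aliceBall σA (fun l => pullB g L (σB' (l.map (pushA f L)))) i) :=
    aliceBall_conj hgf hfg hLne σA σB'
  set σBa : List (GBall (EuclideanSpace ℝ (Fin n))) → GBall (EuclideanSpace ℝ (Fin n)) :=
    fun l => pullB g L (σB' (l.map (pushA f L))) with hσBa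
  -- abbreviations
  set Bb : ℕ → GBall (EuclideanSpace ℝ (Fin n)) := fun i => bobBall σA σBa i with hBb
  set Ab : ℕ → GBall (EuclideanSpace ℝ (Fin n)) := fun i => aliceBall σA σBa i with hAb
  -- component identities
  have hbc : ∀ i, (bobBall (fun l => pushA f L (σA (l.map (pullB g L)))) σB' i).c
      = f (Bb i).c := fun i => by rw [hb i]; rfl
  have hbr : ∀ i, (bobBall (fun l => pushA f L (σA (l.map (pullB g L)))) σB' i).r
      = (Bb i).r * L := fun i => by rw [hb i]; rfl
  have hac : ∀ i, (aliceBall (fun l => pushA f L (σA (l.map (pullB g L)))) σB' i).c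
      = f (Ab i).c := fun i => by rw [ha i]; rfl
  have har : ∀ i, (aliceBall (fun l => pushA f L (σA (l.map (pullB g L)))) σB' i).r
      = (Ab i).r / L := fun i => by rw [ha i]; rfl
  -- Bob's induced play in the auxiliary game is legal
  have hBobAux : BobLegal (β / L ^ 2) σA σBa := by
    constructor
    · have h0 := hBob'.1
      rw [hbr 0] at h0
      nlinarith
    · intro i
      obtain ⟨hsub, hrad⟩ := hBob'.2 i
      constructor
      · intro x hx
        simp only [GBall.toSet, Metric.mem_closedBall] at hx ⊢
        have hfx : f x ∈ (bobBall (fun l => pushA f L (σA (l.map (pullB g L)))) σB'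
            (i + 1)).toSet := by
          simp only [GBall.toSet, Metric.mem_closedBall, hbc, hbr]
          calc dist (f x) (f (Bb (i+1)).c) ≤ L * dist x (Bb (i+1)).c := hup _ _
            _ ≤ L * (Bb (i+1)).r := by nlinarith
            _ = (Bb (i+1)).r * L := mul_comm _ _
        have hfA := hsub hfx
        simp only [GBall.toSet, Metric.mem_closedBall, hac, har] at hfA
        calc dist x (Ab i).c ≤ L * dist (f x) (f (Ab i).c) := hdown _ _
          _ ≤ L * ((Ab i).r / L) := by nlinarith
          _ = (Ab i).r := by field_simp
      · have h1 := hrad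
        rw [hbr (i + 1), har i] at h1
        field_simp at h1 ⊢
        nlinarith [h1]
  obtain ⟨hAleg, hSsub⟩ := hσA σBa hBobAux
  -- Alice's play in the real game is legal
  have hAliceReal : AliceLegal (α / L ^ 2)
      (fun l => pushA f L (σA (l.map (pullB g L)))) σB' := by
    intro i
    constructor
    · intro y hy
      simp only [GBall.toSet, Metric.mem_closedBall, hac, har, hbc, hbr] at hy ⊢
      have hx : dist (g y) (Ab i).c ≤ (Ab i).r := by
        calc dist (g y) (Ab i).c ≤ L * dist (f (g y)) (f (Ab i).c) := hdown _ _
          _ = L * dist y (f (Ab i).c) := by rw [hfg]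
          _ ≤ L * ((Ab i).r / L) := by nlinarith
          _ = (Ab i).r := by field_simp
      have hmem : g y ∈ (Bb i).toSet := (hAleg i).1 (by
        simp only [GBall.toSet, Metric.mem_closedBall]; exact hx)
      simp only [GBall.toSet, Metric.mem_closedBall] at hmem
      calc dist y (f (Bb i).c) = dist (f (g y)) (f (Bb i).c) := by rw [hfg]
        _ ≤ L * dist (g y) (Bb i).c := hup _ _
        _ ≤ L * (Bb i).r := by nlinarith
        _ = (Bb i).r * L := mul_comm _ _
    · rw [har i, hbr i, (hAleg i).2]
      field_simp
      ring
  refine ⟨hAliceReal, ?_⟩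
  -- the intersection of Bob's real balls lies in `f '' S`
  intro x hx
  simp only [Set.mem_iInter] at hx
  -- radii of the real balls are positive and tend to zero
  have hrpos : ∀ i, 0 < (bobBall (fun l => pushA f L (σA (l.map (pullB g L)))) σB' i).r := by
    intro i
    induction i with
    | zero => exact hBob'.1
    | succ i ih =>
      rw [(hBob'.2 i).2, (hAliceReal i).2]
      positivity
  have hbbpos : ∀ i, 0 < (Bb i).r := by
    intro i
    have := hrpos i
    rw [hbr i] at this
    nlinarith
  have hgeom : ∀ i, (bobBall (fun l => pushA f L (σA (l.map (pullB g L)))) σB' i).r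
      = (bobBall (fun l => pushA f L (σA (l.map (pullB g L)))) σB' 0).r
        * (β * (α / L ^ 2)) ^ i := by
    intro i
    induction i with
    | zero => simp
    | succ i ih =>
      rw [(hBob'.2 i).2, (hAliceReal i).2, ih]
      ring
  have hq0 : (0:ℝ) ≤ β * (α / L ^ 2) := by positivity
  have hq1 : β * (α / L ^ 2) < 1 := by
    have h1 : α / L ^ 2 ≤ α := by
      rw [div_le_iff₀ hL2]
      nlinarith [mul_le_mul_of_nonneg_left hL2' hα0.le]
    have h2 : (0:ℝ) < α / L ^ 2 := by positivity
    nlinarith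
  have htend : Filter.Tendsto
      (fun i => (bobBall (fun l => pushA f L (σA (l.map (pullB g L)))) σB' i).r)
      Filter.atTop (nhds 0) := by
    have heq : (fun i => (bobBall (fun l => pushA f L (σA (l.map (pullB g L)))) σB' i).r)
        = fun i => (bobBall (fun l => pushA f L (σA (l.map (pullB g L)))) σB' 0).r
          * (β * (α / L ^ 2)) ^ i := funext hgeom
    rw [heq]
    have := (tendsto_pow_atTop_nhds_zero_of_lt_one hq0 hq1).const_mul
      ((bobBall (fun l => pushA f L (σA (l.map (pullB g L)))) σB' 0).r)
    simpa using this
  -- the auxiliary balls are nested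
  have hnest : ∀ i j, i ≤ j → (Bb j).toSet ⊆ (Bb i).toSet := by
    intro i j hij
    induction j, hij using Nat.le_induction with
    | base => exact fun y hy => hy
    | succ j hij ih =>
      exact fun y hy => ih ((hAleg j).1 ((hBobAux.2 j).1 hy))
  -- `g x` belongs to every auxiliary ball
  have hgx : ∀ i, g x ∈ (Bb i).toSet := by
    intro i
    simp only [GBall.toSet, Metric.mem_closedBall]
    have hbound : ∀ j, i ≤ j → dist (g x) (Bb i).c ≤
        L * (bobBall (fun l => pushA f L (σA (l.map (pullB g L)))) σB' j).r
          + (Bb i).r := by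
      intro j hij
      have hxj := hx j
      simp only [GBall.toSet, Metric.mem_closedBall, hbc, hbr] at hxj
      have h1 : dist (g x) (Bb j).c ≤
          L * (bobBall (fun l => pushA f L (σA (l.map (pullB g L)))) σB' j).r := by
        calc dist (g x) (Bb j).c ≤ L * dist (f (g x)) (f (Bb j).c) := hdown _ _
          _ = L * dist x (f (Bb j).c) := by rw [hfg]
          _ ≤ L * ((Bb j).r * L) := by nlinarith
          _ = L * (bobBall (fun l => pushA f L (σA (l.map (pullB g L)))) σB' j).r := by
              rw [hbr j]
      have h2 : (Bb j).c ∈ (Bb i).toSet :=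
        hnest i j hij (by
          simp only [GBall.toSet, Metric.mem_closedBall, dist_self]
          exact le_of_lt (hbbpos j))
      simp only [GBall.toSet, Metric.mem_closedBall] at h2
      calc dist (g x) (Bb i).c ≤ dist (g x) (Bb j).c + dist (Bb j).c (Bb i).c :=
          dist_triangle _ _ _
        _ ≤ L * (bobBall (fun l => pushA f L (σA (l.map (pullB g L)))) σB' j).r
            + (Bb i).r := add_le_add h1 h2
    have htend2 : Filter.Tendsto
        (fun j => L * (bobBall (fun l => pushA f L (σA (l.map (pullB g L)))) σB' j).r
          + (Bb i).r) Filter.atTop (nhds (L * 0 + (Bb i).r)) :=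
      (htend.const_mul L).add_const _
    have := ge_of_tendsto htend2 (Filter.eventually_atTop.mpr ⟨i, hbound⟩)
    simpa using this
  have hgxS : g x ∈ S := hSsub (Set.mem_iInter.mpr hgx)
  exact ⟨g x, hgxS, hfg x⟩
end

section
/- For a hyperbolic linear automorphism T of T² induced by a matrix in GL(2,ℤ) with no eigenvalues of absolute value 1, and any point y₀ ∈ T², the set ND(T, y₀) of points whose forward T-orbit closure avoids y₀ is dense in T². -/
open Metric

/-- The 2-torus `ℝ²/ℤ²`, realized as a product of two circles `ℝ/ℤ`. -/
abbrev Torus2 : Type := AddCircle (1 : ℝ) × AddCircle (1 : ℝ)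

/-- The plane `ℝ²` (with the Euclidean metric), universal cover of the torus. -/
abbrev Plane : Type := EuclideanSpace ℝ (Fin 2)

/-- The covering projection `ℝ² → 𝕋²`. -/
noncomputable def projT2 (v : Plane) : Torus2 := (↑(v 0), ↑(v 1))

/-- The linear action of an integer matrix `A` on `ℝ²`. -/
noncomputable def linAct (A : Matrix (Fin 2) (Fin 2) ℤ) (v : Plane) : Plane :=
  (EuclideanSpace.equiv (Fin 2) ℝ).symm
    ![(A 0 0 : ℝ) * v 0 + (A 0 1 : ℝ) * v 1, (A 1 0 : ℝ) * v 0 + (A 1 1 : ℝ) * v 1]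

/-- `ND(T, y₀)`: the set of points of the torus whose forward `T`-orbit closure does
not contain `y₀`. -/
def nonDenseSet (T : Torus2 → Torus2) (y₀ : Torus2) : Set Torus2 :=
  {x | y₀ ∉ closure (Set.range fun n : ℕ => T^[n] x)}

lemma equiv_symm_apply (f : Fin 2 → ℝ) (i : Fin 2) :
    (EuclideanSpace.equiv (Fin 2) ℝ).symm f i = f i := rfl

noncomputable def vec2 (s t : ℝ) : Plane :=
  (EuclideanSpace.equiv (Fin 2) ℝ).symm ![s, t]

lemma vec2_apply0 (s t : ℝ) : vec2 s t 0 = s := rfl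
lemma vec2_apply1 (s t : ℝ) : vec2 s t 1 = t := rfl

lemma linAct_vec2 (A : Matrix (Fin 2) (Fin 2) ℤ) (s t : ℝ) :
    linAct A (vec2 s t) =
      vec2 ((A 0 0 : ℝ) * s + (A 0 1 : ℝ) * t) ((A 1 0 : ℝ) * s + (A 1 1 : ℝ) * t) := rfl

lemma linAct_one (v : Plane) : linAct 1 v = v := by
  ext i
  fin_cases i <;> simp [linAct, Matrix.one_apply]

lemma linAct_comp (A B : Matrix (Fin 2) (Fin 2) ℤ) (v : Plane) :
    linAct A (linAct B v) = linAct (A * B) v := by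
  ext i
  fin_cases i <;>
    · simp only [linAct, Matrix.mul_apply, Fin.sum_univ_two, equiv_symm_apply, Matrix.cons_val_zero,
        Matrix.cons_val_one, Matrix.head_cons]
      push_cast
      ring

lemma projT2_vec2 (s t : ℝ) : projT2 (vec2 s t) = (↑s, ↑t) := rfl

lemma iter_proj (A : Matrix (Fin 2) (Fin 2) ℤ) (T : Torus2 → Torus2)
    (hT : ∀ v : Plane, T (projT2 v) = projT2 (linAct A v)) (n : ℕ) (v : Plane) :
    T^[n] (projT2 v) = projT2 (linAct (A ^ n) v) := by
  induction n with
  | zero => simp [linAct_one]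
  | succ n ih =>
      rw [Function.iterate_succ_apply', ih, hT, linAct_comp, ← pow_succ']

lemma iter_rat (A : Matrix (Fin 2) (Fin 2) ℤ) (T : Torus2 → Torus2)
    (hT : ∀ v : Plane, T (projT2 v) = projT2 (linAct A v)) (n : ℕ)
    (q : ℕ) (a b : ℤ) :
    T^[n] (projT2 (vec2 ((a : ℝ)/q) ((b : ℝ)/q))) =
      projT2 (vec2 ((((A ^ n) 0 0 * a + (A ^ n) 0 1 * b : ℤ) : ℝ)/q)
        ((((A ^ n) 1 0 * a + (A ^ n) 1 1 * b : ℤ) : ℝ)/q)) := by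
  rw [iter_proj A T hT, linAct_vec2]
  congr 2 <;> push_cast <;> ring

lemma proj_eq_iff_dvd (q : ℕ) (hq : q ≠ 0) (a b : ℤ) :
    (((a : ℝ)/q : ℝ) : AddCircle (1 : ℝ)) = ((b : ℝ)/q : ℝ) ↔ (q : ℤ) ∣ a - b := by
  have hq' : (q : ℝ) ≠ 0 := Nat.cast_ne_zero.mpr hq
  rw [show ((((a : ℝ)/q : ℝ) : AddCircle (1 : ℝ)) = ((b : ℝ)/q : ℝ)) =
      ((((a : ℝ)/q : ℝ) : AddCircle (1 : ℝ)) = (((b : ℝ)/q : ℝ) : ℝ)) from rfl,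
    QuotientAddGroup.eq_iff_sub_mem, AddSubgroup.mem_zmultiples_iff]
  constructor
  · rintro ⟨k, hk⟩
    refine ⟨k, ?_⟩
    have : (k : ℝ) = (a : ℝ)/q - (b : ℝ)/q := by simpa using hk
    have h2 : ((a - b : ℤ) : ℝ) = ((q * k : ℤ) : ℝ) := by
      push_cast
      field_simp at this ⊢
      linarith [this]
    exact_mod_cast h2
  · rintro ⟨k, hk⟩
    refine ⟨k, ?_⟩
    have h2 : ((a : ℤ) : ℝ) - b = ((q : ℤ) : ℝ) * k := by exact_mod_cast congrArg (Int.cast : ℤ → ℝ) hk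
    push_cast at h2
    simp only [zsmul_eq_mul, mul_one]
    field_simp
    linarith

lemma proj_eq_iff_zmod (q : ℕ) (hq : q ≠ 0) (a b : ℤ) :
    (((a : ℝ)/q : ℝ) : AddCircle (1 : ℝ)) = ((b : ℝ)/q : ℝ) ↔
      ((a : ZMod q) = (b : ZMod q)) := by
  rw [proj_eq_iff_dvd q hq, ZMod.intCast_eq_intCast_iff, Int.modEq_iff_dvd]
  constructor
  · rintro ⟨k, hk⟩; exact ⟨-k, by linarith⟩
  · rintro ⟨k, hk⟩; exact ⟨-k, by linarith⟩

lemma dist_proj_le (v w : Plane) :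
    dist (projT2 v) (projT2 w) ≤ max |v 0 - w 0| |v 1 - w 1| := by
  rw [Prod.dist_eq]
  have h0 : dist ((v 0 : AddCircle (1:ℝ))) (w 0) ≤ |v 0 - w 0| := by
    rw [dist_eq_norm, ← QuotientAddGroup.mk_sub]
    simpa [Real.norm_eq_abs] using (QuotientAddGroup.norm_mk_le_norm (S := AddSubgroup.zmultiples (1:ℝ)) (m := v 0 - w 0))
  have h1 : dist ((v 1 : AddCircle (1:ℝ))) (w 1) ≤ |v 1 - w 1| := by
    rw [dist_eq_norm, ← QuotientAddGroup.mk_sub]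
    simpa [Real.norm_eq_abs] using (QuotientAddGroup.norm_mk_le_norm (S := AddSubgroup.zmultiples (1:ℝ)) (m := v 1 - w 1))
  exact max_le_max h0 h1

lemma mem_ND (A : Matrix (Fin 2) (Fin 2) ℤ) (T : Torus2 → Torus2)
    (hT : ∀ v : Plane, T (projT2 v) = projT2 (linAct A v)) (y₀ : Torus2)
    (q : ℕ) (hq : q ≠ 0) (a b : ℤ)
    (h : ∀ n : ℕ, T^[n] (projT2 (vec2 ((a : ℝ)/q) ((b : ℝ)/q))) ≠ y₀) :
    projT2 (vec2 ((a : ℝ)/q) ((b : ℝ)/q)) ∈ nonDenseSet T y₀ := by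
  have hq0 : 0 < (q : ℤ) := by exact_mod_cast Nat.pos_of_ne_zero hq
  set S : Set Torus2 :=
    (fun ij : Fin q × Fin q =>
      projT2 (vec2 (((ij.1 : ℕ) : ℝ)/q) (((ij.2 : ℕ) : ℝ)/q))) '' Set.univ with hS
  have hSfin : S.Finite := Set.Finite.image _ Set.finite_univ
  have hsub : (Set.range fun n : ℕ => T^[n] (projT2 (vec2 ((a : ℝ)/q) ((b : ℝ)/q)))) ⊆ S := by
    rintro z ⟨n, rfl⟩
    set u : ℤ := (A ^ n) 0 0 * a + (A ^ n) 0 1 * b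
    set w : ℤ := (A ^ n) 1 0 * a + (A ^ n) 1 1 * b
    have hu : (u % q).toNat < q := by
      rw [Int.toNat_lt (Int.emod_nonneg u hq0.ne')]
      exact Int.emod_lt_of_pos u hq0
    have hw : (w % q).toNat < q := by
      rw [Int.toNat_lt (Int.emod_nonneg w hq0.ne')]
      exact Int.emod_lt_of_pos w hq0
    refine ⟨(⟨(u % q).toNat, hu⟩, ⟨(w % q).toNat, hw⟩), trivial, ?_⟩
    symm
    show T^[n] _ = projT2 (vec2 ((((u % q).toNat : ℕ) : ℝ)/q) ((((w % q).toNat : ℕ) : ℝ)/q))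
    rw [iter_rat A T hT]
    have hmod : ∀ x : ℤ, (q : ℤ) ∣ x - (x % q) := fun x => by
      have := Int.mul_ediv_add_emod x q
      exact ⟨x / q, by linarith⟩
    have e1 : ((((u % q).toNat : ℕ) : ℝ)/q : ℝ) = (((u % q : ℤ) : ℝ)/q : ℝ) := by
      congr 1
      exact_mod_cast congrArg (Int.cast : ℤ → ℝ) (Int.toNat_of_nonneg (Int.emod_nonneg u hq0.ne'))
    have e2 : ((((w % q).toNat : ℕ) : ℝ)/q : ℝ) = (((w % q : ℤ) : ℝ)/q : ℝ) := by
      congr 1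
      exact_mod_cast congrArg (Int.cast : ℤ → ℝ) (Int.toNat_of_nonneg (Int.emod_nonneg w hq0.ne'))
    rw [projT2_vec2, projT2_vec2, Prod.mk.injEq, e1, e2]
    exact ⟨(proj_eq_iff_dvd q hq _ _).2 (hmod u), (proj_eq_iff_dvd q hq _ _).2 (hmod w)⟩
  have hfin : (Set.range fun n : ℕ =>
      T^[n] (projT2 (vec2 ((a : ℝ)/q) ((b : ℝ)/q)))).Finite := hSfin.subset hsub
  intro hy
  rw [hfin.isClosed.closure_eq] at hy
  obtain ⟨n, hn⟩ := hy
  exact h n hn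

lemma p_dvd_of_eq (A : Matrix (Fin 2) (Fin 2) ℤ) (hdet : A.det = 1 ∨ A.det = -1)
    (q : ℕ) (p : ℕ) (hpq : (p : ℤ) ∣ (q : ℤ)) (n : ℕ) (a b c e : ℤ)
    (h1 : (((A ^ n) 0 0 * a + (A ^ n) 0 1 * b : ℤ) : ZMod q) = ((p * c : ℤ) : ZMod q))
    (h2 : (((A ^ n) 1 0 * a + (A ^ n) 1 1 * b : ℤ) : ZMod q) = ((p * e : ℤ) : ZMod q)) :
    (p : ℤ) ∣ a := by
  set f := Int.castRingHom (ZMod q) with hf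
  set M : Matrix (Fin 2) (Fin 2) (ZMod q) := (A ^ n).map f with hM
  have hdetM : IsUnit M.det := by
    have hd : M.det = f ((A ^ n).det) := (RingHom.map_det f (A ^ n)).symm
    rw [hd, Matrix.det_pow]
    rcases hdet with h | h <;> rw [h]
    · simp
    · exact ((isUnit_one.neg).pow n).map f
  have hv : M.mulVec ![(a : ZMod q), (b : ZMod q)] =
      ![((p * c : ℤ) : ZMod q), ((p * e : ℤ) : ZMod q)] := by
    funext i
    fin_cases i
    · simp only [Matrix.mulVec, dotProduct, Fin.sum_univ_two, hM,
        Matrix.map_apply, hf, Matrix.cons_val_zero, Matrix.cons_val_one, Matrix.head_cons,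
        Fin.isValue, Int.coe_castRingHom]
      push_cast at h1 ⊢
      convert h1 using 2
    · simp only [Matrix.mulVec, dotProduct, Fin.sum_univ_two, hM,
        Matrix.map_apply, hf, Matrix.cons_val_zero, Matrix.cons_val_one, Matrix.head_cons,
        Fin.isValue, Int.coe_castRingHom]
      push_cast at h2 ⊢
      convert h2 using 2
  have hinv : (![(a : ZMod q), (b : ZMod q)] : Fin 2 → ZMod q) =
      M⁻¹.mulVec ![((p * c : ℤ) : ZMod q), ((p * e : ℤ) : ZMod q)] := by
    rw [← hv, Matrix.mulVec_mulVec, Matrix.nonsing_inv_mul M hdetM, Matrix.one_mulVec]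
  have ha : (a : ZMod q) = (p : ZMod q) * (M⁻¹ 0 0 * c + M⁻¹ 0 1 * e) := by
    have := congrFun hinv 0
    simp only [Matrix.cons_val_zero] at this
    rw [this]
    simp only [Matrix.mulVec, dotProduct, Fin.sum_univ_two,
      Matrix.cons_val_zero, Matrix.cons_val_one, Matrix.head_cons]
    push_cast
    ring
  obtain ⟨w, hw⟩ := ZMod.intCast_surjective (M⁻¹ 0 0 * (c : ZMod q) + M⁻¹ 0 1 * (e : ZMod q))
  rw [← hw] at ha
  have : (a : ZMod q) = ((p * w : ℤ) : ZMod q) := by rw [ha]; push_cast; ring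
  rw [ZMod.intCast_eq_intCast_iff, Int.modEq_iff_dvd] at this
  obtain ⟨k, hk⟩ := hpq.trans this
  exact ⟨w - k, by linarith⟩

lemma exists_near (q p : ℕ) (hq : q ≠ 0) (hp : p.Prime) (hqp : p ≤ q)
    (r : ℝ) (hr : 0 < r) (h2 : 2 / r < p) (r₁ r₂ : ℝ) :
    ∃ a b : ℤ, ¬ ((p : ℤ) ∣ a) ∧
      dist (projT2 (vec2 ((a : ℝ)/q) ((b : ℝ)/q))) (projT2 (vec2 r₁ r₂)) < r := by
  have hq' : (0 : ℝ) < q := by exact_mod_cast Nat.pos_of_ne_zero hq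
  have hp' : (0 : ℝ) < p := by exact_mod_cast hp.pos
  set a0 : ℤ := ⌊(q : ℝ) * r₁⌋ with ha0
  set b : ℤ := ⌊(q : ℝ) * r₂⌋ with hb
  set a : ℤ := if (p : ℤ) ∣ a0 then a0 + 1 else a0 with ha
  refine ⟨a, b, ?_, ?_⟩
  · rw [ha]
    split_ifs with hdvd
    · intro hdvd'
      have h1 : (p : ℤ) ∣ 1 := by
        have := dvd_sub hdvd' hdvd
        simpa using this
      have := Int.le_of_dvd one_pos h1
      have := hp.two_le
      omega
    · exact hdvd
  · have key : ∀ x : ℝ, ∀ m : ℤ, |(m : ℝ) - (q : ℝ) * x| ≤ 1 →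
        |(m : ℝ)/q - x| < r := by
      intro x m hm
      have heq : (m : ℝ)/q - x = ((m : ℝ) - q * x)/q := by field_simp
      rw [heq, abs_div, abs_of_pos hq']
      have hle : |(m : ℝ) - (q : ℝ) * x| / q ≤ 1 / q := by gcongr
      have h1q : 1 / (q : ℝ) < r := by
        have hpq : (p : ℝ) ≤ q := by exact_mod_cast hqp
        have h4 : 2 / r < (q : ℝ) := lt_of_lt_of_le h2 hpq
        have h3 : 2 < (q : ℝ) * r := by rwa [div_lt_iff₀ hr] at h4
        rw [div_lt_iff₀ hq']
        nlinarith
      exact lt_of_le_of_lt hle h1q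
    have hda : |(a : ℝ) - (q : ℝ) * r₁| ≤ 1 := by
      have h1 := Int.floor_le ((q : ℝ) * r₁)
      have h2' := Int.lt_floor_add_one ((q : ℝ) * r₁)
      rw [ha]
      split_ifs <;> · rw [abs_le]; push_cast; constructor <;> linarith
    have hdb : |(b : ℝ) - (q : ℝ) * r₂| ≤ 1 := by
      have h1 := Int.floor_le ((q : ℝ) * r₂)
      have h2' := Int.lt_floor_add_one ((q : ℝ) * r₂)
      rw [abs_le]; constructor <;> · push_cast; linarith
    refine lt_of_le_of_lt (dist_proj_le _ _) ?_
    rw [vec2_apply0, vec2_apply0, vec2_apply1, vec2_apply1]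
    exact max_lt (key r₁ a hda) (key r₂ b hdb)


/-- For the hyperbolic linear automorphism `T` of the 2-torus induced by
a matrix `A ∈ GL(2, ℤ)` (`det A = ±1`) with no eigenvalue of absolute value `1`, and
any `y₀ ∈ 𝕋²`, the set `ND(T, y₀)` is dense in `𝕋²`. -/
theorem hyperbolic_auto_nondense_dense (A : Matrix (Fin 2) (Fin 2) ℤ)
    (hdet : A.det = 1 ∨ A.det = -1)
    (heig : ∀ c : ℂ, (Matrix.charpoly (A.map (fun z : ℤ => (z : ℂ)))).IsRoot c →
      ‖c‖ ≠ 1)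
    (T : Torus2 → Torus2) (hT : ∀ v : Plane, T (projT2 v) = projT2 (linAct A v))
    (y₀ : Torus2) :
    Dense (nonDenseSet T y₀) := by
  rw [Metric.dense_iff]
  intro x r hr
  obtain ⟨r₁, hr1⟩ := QuotientAddGroup.mk_surjective x.1
  obtain ⟨r₂, hr2⟩ := QuotientAddGroup.mk_surjective x.2
  have hx : x = projT2 (vec2 r₁ r₂) := by
    rw [projT2_vec2, hr1, hr2]
  obtain ⟨p, hpge, hpp⟩ := Nat.exists_infinite_primes (⌈2 / r⌉₊ + 1)
  have h2r : 2 / r < (p : ℝ) := by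
    have h1 : 2 / r ≤ (⌈2 / r⌉₊ : ℝ) := Nat.le_ceil _
    have h2 : ((⌈2 / r⌉₊ + 1 : ℕ) : ℝ) ≤ p := by exact_mod_cast hpge
    push_cast at h2
    linarith
  by_cases hy : ∃ (d : ℕ) (c e : ℤ), d ≠ 0 ∧
      y₀ = ((((c : ℝ)/d : ℝ) : AddCircle (1 : ℝ)), (((e : ℝ)/d : ℝ) : AddCircle (1 : ℝ)))
  · obtain ⟨d, c, e, hd, hy0⟩ := hy
    set q : ℕ := d * p with hqdef
    have hq : q ≠ 0 := Nat.mul_ne_zero hd hpp.ne_zero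
    have hqp : p ≤ q := Nat.le_mul_of_pos_left p (Nat.pos_of_ne_zero hd)
    obtain ⟨a, b, hpa, hdist⟩ := exists_near q p hq hpp hqp r hr h2r r₁ r₂
    refine ⟨projT2 (vec2 ((a : ℝ)/q) ((b : ℝ)/q)), ?_, ?_⟩
    · rw [mem_ball, hx]; exact hdist
    · apply mem_ND A T hT y₀ q hq a b
      intro n hn
      rw [iter_rat A T hT, hy0, projT2_vec2, Prod.mk.injEq] at hn
      obtain ⟨hn1, hn2⟩ := hn
      have hd' : ((d : ℝ)) ≠ 0 := Nat.cast_ne_zero.mpr hd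
      have hp' : ((p : ℝ)) ≠ 0 := Nat.cast_ne_zero.mpr hpp.ne_zero
      have hcd : ((c : ℝ)/d : ℝ) = (((p * c : ℤ) : ℝ)/q : ℝ) := by
        rw [hqdef]; push_cast; field_simp
      have hed : ((e : ℝ)/d : ℝ) = (((p * e : ℤ) : ℝ)/q : ℝ) := by
        rw [hqdef]; push_cast; field_simp
      rw [hcd] at hn1
      rw [hed] at hn2
      rw [proj_eq_iff_zmod q hq] at hn1 hn2
      have hpq : (p : ℤ) ∣ (q : ℤ) := by exact_mod_cast Dvd.intro_left d rfl
      exact hpa (p_dvd_of_eq A hdet q p hpq n a b c e hn1 hn2)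
  · have hq : p ≠ 0 := hpp.ne_zero
    obtain ⟨a, b, hpa, hdist⟩ := exists_near p p hq hpp le_rfl r hr h2r r₁ r₂
    refine ⟨projT2 (vec2 ((a : ℝ)/p) ((b : ℝ)/p)), ?_, ?_⟩
    · rw [mem_ball, hx]; exact hdist
    · apply mem_ND A T hT y₀ p hq a b
      intro n hn
      rw [iter_rat A T hT, projT2_vec2] at hn
      exact hy ⟨p, (A ^ n) 0 0 * a + (A ^ n) 0 1 * b, (A ^ n) 1 0 * a + (A ^ n) 1 1 * b,
        hq, hn.symm⟩
end
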